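/- arXiv:0809.0143 — 4 statements merged into one kernel-verified Lean document; each statement's English description precedes it below -/
import Mathlib

section
/- Let φ : sl₃(ℂ) → sl₃(ℂ) be a ℂ-linear map such that φ ∘ φ = id and φ(g X g⁻¹) = (ₜg)⁻¹ φ(X) (ₜg) for every g ∈ GL₃(ℂ) and every X ∈ sl₃(ℂ). Then either φ(X) = ₜX for all X ∈ sl₃(ℂ), or φ(X) = −ₜX for all X ∈ sl₃(ℂ). -/
open Matrix

noncomputable section

/-- The 3×3 matrix with ones on the anti-diagonal. -/
def J3 : Matrix (Fin 3) (Fin 3) ℂ := !![0,0,1; 0,1,0; 1,0,0]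

/-- `sl₃(ℂ)`: the space of traceless 3×3 complex matrices. -/
def sl3 : Submodule ℂ (Matrix (Fin 3) (Fin 3) ℂ) :=
  LinearMap.ker (Matrix.traceLinearMap (Fin 3) ℂ ℂ)

namespace SL3Aux

def msl (N : Matrix (Fin 3) (Fin 3) ℂ) (h : N.trace = 0) : sl3 :=
  ⟨N, by simpa [sl3, LinearMap.mem_ker] using h⟩

def glmk (A B : Matrix (Fin 3) (Fin 3) ℂ) (h1 : A * B = 1) (h2 : B * A = 1) :
    GL (Fin 3) ℂ := ⟨A, B, h1, h2⟩

def e01 : sl3 := msl !![0,1,0;0,0,0;0,0,0] (by simp [Matrix.trace_fin_three, Matrix.vecHead, Matrix.vecTail])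
def e02 : sl3 := msl !![0,0,1;0,0,0;0,0,0] (by simp [Matrix.trace_fin_three, Matrix.vecHead, Matrix.vecTail])
def e10 : sl3 := msl !![0,0,0;1,0,0;0,0,0] (by simp [Matrix.trace_fin_three, Matrix.vecHead, Matrix.vecTail])
def e12 : sl3 := msl !![0,0,0;0,0,1;0,0,0] (by simp [Matrix.trace_fin_three, Matrix.vecHead, Matrix.vecTail])
def e20 : sl3 := msl !![0,0,0;0,0,0;1,0,0] (by simp [Matrix.trace_fin_three, Matrix.vecHead, Matrix.vecTail])
def e21 : sl3 := msl !![0,0,0;0,0,0;0,1,0] (by simp [Matrix.trace_fin_three, Matrix.vecHead, Matrix.vecTail])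
def h1 : sl3 := msl !![1,0,0;0,-1,0;0,0,0] (by simp [Matrix.trace_fin_three, Matrix.vecHead, Matrix.vecTail])
def h2 : sl3 := msl !![0,0,0;0,1,0;0,0,-1] (by simp [Matrix.trace_fin_three, Matrix.vecHead, Matrix.vecTail])

lemma J3_diag (d : Fin 3 → ℂ) :
    J3 * (Matrix.diagonal d)ᵀ * J3 = Matrix.diagonal ![d 2, d 1, d 0] := by
  ext i j
  fin_cases i <;> fin_cases j <;>
    simp [J3, Matrix.mul_apply, Matrix.vecMul, dotProduct, Fin.sum_univ_three,
      Matrix.diagonal_apply, Matrix.vecHead, Matrix.vecTail]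

lemma diag_entry_zero {s : ℂ} {u v : Fin 3 → ℂ} {M : Matrix (Fin 3) (Fin 3) ℂ}
    (h : s • M = Matrix.diagonal u * M * Matrix.diagonal v) (i j : Fin 3)
    (hne : u i * v j ≠ s) : M i j = 0 := by
  have h' := congrFun (congrFun h i) j
  simp [Matrix.diagonal_mul, Matrix.mul_diagonal] at h'
  have h0 : (u i * v j - s) * M i j = 0 := by linear_combination -h'
  rcases mul_eq_zero.mp h0 with h3 | h3
  · exact absurd (sub_eq_zero.mp h3) hne
  · exact h3

def Dm : Matrix (Fin 3) (Fin 3) ℂ := !![1,0,0;0,2,0;0,0,5]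
def Dim : Matrix (Fin 3) (Fin 3) ℂ := !![1,0,0;0,1/2,0;0,0,1/5]

def gD : GL (Fin 3) ℂ := glmk Dm Dim
  (by ext i j; fin_cases i <;> fin_cases j <;> norm_num [Matrix.cons_val_two, Dm, Dim, Matrix.mul_apply, Fin.sum_univ_three, Matrix.one_apply, Matrix.vecHead, Matrix.vecTail, Fin.ext_iff])
  (by ext i j; fin_cases i <;> fin_cases j <;> norm_num [Matrix.cons_val_two, Dm, Dim, Matrix.mul_apply, Fin.sum_univ_three, Matrix.one_apply, Matrix.vecHead, Matrix.vecTail, Fin.ext_iff])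

lemma hDm : Dm = Matrix.diagonal ![1,2,5] := by
  ext i j; fin_cases i <;> fin_cases j <;> rfl
lemma hDim : Dim = Matrix.diagonal ![1,1/2,1/5] := by
  ext i j; fin_cases i <;> fin_cases j <;> rfl

def mkuni (A B : Matrix (Fin 3) (Fin 3) ℂ) (h1 : A * B = 1) (h2 : B * A = 1) : GL (Fin 3) ℂ := glmk A B h1 h2

def g1 : GL (Fin 3) ℂ := glmk !![1,1,0;0,1,0;0,0,1] !![1,-1,0;0,1,0;0,0,1]
  (by ext i j; fin_cases i <;> fin_cases j <;> norm_num [Matrix.cons_val_two, Matrix.mul_apply, Fin.sum_univ_three, Matrix.one_apply, Matrix.vecHead, Matrix.vecTail, Fin.ext_iff])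
  (by ext i j; fin_cases i <;> fin_cases j <;> norm_num [Matrix.cons_val_two, Matrix.mul_apply, Fin.sum_univ_three, Matrix.one_apply, Matrix.vecHead, Matrix.vecTail, Fin.ext_iff])

def g2 : GL (Fin 3) ℂ := glmk !![1,0,0;0,1,1;0,0,1] !![1,0,0;0,1,-1;0,0,1]
  (by ext i j; fin_cases i <;> fin_cases j <;> norm_num [Matrix.cons_val_two, Matrix.mul_apply, Fin.sum_univ_three, Matrix.one_apply, Matrix.vecHead, Matrix.vecTail, Fin.ext_iff])
  (by ext i j; fin_cases i <;> fin_cases j <;> norm_num [Matrix.cons_val_two, Matrix.mul_apply, Fin.sum_univ_three, Matrix.one_apply, Matrix.vecHead, Matrix.vecTail, Fin.ext_iff])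

def g3 : GL (Fin 3) ℂ := glmk !![1,0,1;0,1,0;0,0,1] !![1,0,-1;0,1,0;0,0,1]
  (by ext i j; fin_cases i <;> fin_cases j <;> norm_num [Matrix.cons_val_two, Matrix.mul_apply, Fin.sum_univ_three, Matrix.one_apply, Matrix.vecHead, Matrix.vecTail, Fin.ext_iff])
  (by ext i j; fin_cases i <;> fin_cases j <;> norm_num [Matrix.cons_val_two, Matrix.mul_apply, Fin.sum_univ_three, Matrix.one_apply, Matrix.vecHead, Matrix.vecTail, Fin.ext_iff])

end SL3Aux

open SL3Aux

set_option maxHeartbeats 16000000 in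
/-- A ℂ-linear involution `φ` of `sl₃(ℂ)` satisfying
`φ(g X g⁻¹) = (ₜg)⁻¹ φ(X) (ₜg)` for all `g ∈ GL₃(ℂ)` is either `X ↦ ₜX`
or `X ↦ −ₜX`, where `ₜA = J₃ ᵗA J₃`. -/
theorem stmt1 (φ : Module.End ℂ sl3)
    (hinv : φ ∘ₗ φ = LinearMap.id)
    (hequiv : ∀ (g : GL (Fin 3) ℂ) (X Y : sl3),
      (Y : Matrix (Fin 3) (Fin 3) ℂ) =
        (g : Matrix (Fin 3) (Fin 3) ℂ) * (X : Matrix (Fin 3) (Fin 3) ℂ) *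
          ((g⁻¹ : GL (Fin 3) ℂ) : Matrix (Fin 3) (Fin 3) ℂ) →
      (φ Y : Matrix (Fin 3) (Fin 3) ℂ) =
        (J3 * ((g⁻¹ : GL (Fin 3) ℂ) : Matrix (Fin 3) (Fin 3) ℂ)ᵀ * J3) *
          (φ X : Matrix (Fin 3) (Fin 3) ℂ) *
          (J3 * ((g : Matrix (Fin 3) (Fin 3) ℂ))ᵀ * J3)) :
    (∀ X : sl3, (φ X : Matrix (Fin 3) (Fin 3) ℂ) =
        J3 * (X : Matrix (Fin 3) (Fin 3) ℂ)ᵀ * J3) ∨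
    (∀ X : sl3, (φ X : Matrix (Fin 3) (Fin 3) ℂ) =
        -(J3 * (X : Matrix (Fin 3) (Fin 3) ℂ)ᵀ * J3)) := by
  -- step 1 : diagonal conjugation constraints
  have key : ∀ (X : sl3) (s : ℂ), Dm * (X : Matrix (Fin 3) (Fin 3) ℂ) * Dim = s • (X : Matrix (Fin 3) (Fin 3) ℂ) →
      s • (φ X : Matrix (Fin 3) (Fin 3) ℂ) =
        Matrix.diagonal ![1/5,1/2,1] * (φ X : Matrix (Fin 3) (Fin 3) ℂ) * Matrix.diagonal ![5,2,1] := by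
    intro X s hc
    have h := hequiv gD X (s • X) (by
      show s • (X : Matrix (Fin 3) (Fin 3) ℂ) = Dm * (X : Matrix (Fin 3) (Fin 3) ℂ) * Dim
      rw [hc])
    have hA : J3 * (Dim)ᵀ * J3 = Matrix.diagonal ![1/5,1/2,1] := by
      rw [hDim, J3_diag]; norm_num [Matrix.cons_val_two]
    have hB : J3 * (Dm)ᵀ * J3 = Matrix.diagonal ![5,2,1] := by
      rw [hDm, J3_diag]; norm_num [Matrix.cons_val_two]
    have hg1 : ((gD : GL (Fin 3) ℂ) : Matrix (Fin 3) (Fin 3) ℂ) = Dm := rfl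
    have hg2 : ((gD⁻¹ : GL (Fin 3) ℂ) : Matrix (Fin 3) (Fin 3) ℂ) = Dim := rfl
    have hsm : ((φ (s • X) : sl3) : Matrix (Fin 3) (Fin 3) ℂ) = s • (φ X : Matrix (Fin 3) (Fin 3) ℂ) := by
      rw [_root_.map_smul]; rfl
    rw [hg1, hg2, hsm, hA, hB] at h
    exact h
  -- step 2: shapes of basis images
  have val01 : Dm * (e01 : Matrix (Fin 3) (Fin 3) ℂ) * Dim = ((1:ℂ)/2) • (e01 : Matrix (Fin 3) (Fin 3) ℂ) := by
    ext i j; fin_cases i <;> fin_cases j <;>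
      norm_num [Matrix.cons_val_two, Dm, Dim, e01, msl, Matrix.mul_apply, Fin.sum_univ_three, Matrix.vecHead, Matrix.vecTail]
  have k01 := key e01 ((1:ℂ)/2) val01
  have s01 : ((φ e01 : sl3) : Matrix (Fin 3) (Fin 3) ℂ) =
      !![0,0,0;0,0,((φ e01 : sl3) : Matrix (Fin 3) (Fin 3) ℂ) 1 2;0,0,0] := by
    ext i j
    fin_cases i <;> fin_cases j <;>
      simp [Matrix.vecHead, Matrix.vecTail] <;>
      exact diag_entry_zero k01 _ _ (by norm_num [Matrix.cons_val_two, Matrix.vecHead, Matrix.vecTail])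
  have valh1 : Dm * (h1 : Matrix (Fin 3) (Fin 3) ℂ) * Dim = ((1:ℂ)) • (h1 : Matrix (Fin 3) (Fin 3) ℂ) := by
    ext i j; fin_cases i <;> fin_cases j <;>
      norm_num [Matrix.cons_val_two, Dm, Dim, h1, msl, Matrix.mul_apply, Fin.sum_univ_three, Matrix.vecHead, Matrix.vecTail]
  have kh1 := key h1 1 valh1
  have th1 : ((φ h1 : sl3) : Matrix (Fin 3) (Fin 3) ℂ) 0 0 + ((φ h1 : sl3) : Matrix (Fin 3) (Fin 3) ℂ) 1 1
      + ((φ h1 : sl3) : Matrix (Fin 3) (Fin 3) ℂ) 2 2 = 0 := by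
    have hm' : ((φ h1 : sl3) : Matrix (Fin 3) (Fin 3) ℂ).trace = 0 :=
      LinearMap.mem_ker.mp (φ h1).2
    rw [Matrix.trace_fin_three] at hm'
    exact hm'
  have sh1 : ((φ h1 : sl3) : Matrix (Fin 3) (Fin 3) ℂ) =
      !![((φ h1 : sl3) : Matrix (Fin 3) (Fin 3) ℂ) 0 0,0,0;
         0,((φ h1 : sl3) : Matrix (Fin 3) (Fin 3) ℂ) 1 1,0;
         0,0,-((φ h1 : sl3) : Matrix (Fin 3) (Fin 3) ℂ) 0 0 - ((φ h1 : sl3) : Matrix (Fin 3) (Fin 3) ℂ) 1 1] := by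
    ext i j
    fin_cases i <;> fin_cases j <;>
      simp [Matrix.vecHead, Matrix.vecTail] <;>
      first
        | exact diag_entry_zero kh1 _ _ (by norm_num [Matrix.cons_val_two, Matrix.vecHead, Matrix.vecTail])
        | linear_combination th1
  have val02 : Dm * (e02 : Matrix (Fin 3) (Fin 3) ℂ) * Dim = (1/5 : ℂ) • (e02 : Matrix (Fin 3) (Fin 3) ℂ) := by
    ext i j; fin_cases i <;> fin_cases j <;>
      norm_num [Matrix.cons_val_two, Dm, Dim, e02, msl, Matrix.mul_apply, Fin.sum_univ_three, Matrix.vecHead, Matrix.vecTail]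
  have k02 := key e02 (1/5 : ℂ) val02
  have s02 : ((φ e02 : sl3) : Matrix (Fin 3) (Fin 3) ℂ) =
      !![0,0,((φ e02 : sl3) : Matrix (Fin 3) (Fin 3) ℂ) 0 2;0,0,0;0,0,0] := by
    ext i j
    fin_cases i <;> fin_cases j <;>
      simp [Matrix.vecHead, Matrix.vecTail] <;>
      exact diag_entry_zero k02 _ _ (by norm_num [Matrix.cons_val_two, Matrix.vecHead, Matrix.vecTail])
  have val10 : Dm * (e10 : Matrix (Fin 3) (Fin 3) ℂ) * Dim = (2 : ℂ) • (e10 : Matrix (Fin 3) (Fin 3) ℂ) := by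
    ext i j; fin_cases i <;> fin_cases j <;>
      norm_num [Matrix.cons_val_two, Dm, Dim, e10, msl, Matrix.mul_apply, Fin.sum_univ_three, Matrix.vecHead, Matrix.vecTail]
  have k10 := key e10 (2 : ℂ) val10
  have s10 : ((φ e10 : sl3) : Matrix (Fin 3) (Fin 3) ℂ) =
      !![0,0,0;0,0,0;0,((φ e10 : sl3) : Matrix (Fin 3) (Fin 3) ℂ) 2 1,0] := by
    ext i j
    fin_cases i <;> fin_cases j <;>
      simp [Matrix.vecHead, Matrix.vecTail] <;>
      exact diag_entry_zero k10 _ _ (by norm_num [Matrix.cons_val_two, Matrix.vecHead, Matrix.vecTail])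
  have val12 : Dm * (e12 : Matrix (Fin 3) (Fin 3) ℂ) * Dim = (2/5 : ℂ) • (e12 : Matrix (Fin 3) (Fin 3) ℂ) := by
    ext i j; fin_cases i <;> fin_cases j <;>
      norm_num [Matrix.cons_val_two, Dm, Dim, e12, msl, Matrix.mul_apply, Fin.sum_univ_three, Matrix.vecHead, Matrix.vecTail]
  have k12 := key e12 (2/5 : ℂ) val12
  have s12 : ((φ e12 : sl3) : Matrix (Fin 3) (Fin 3) ℂ) =
      !![0,((φ e12 : sl3) : Matrix (Fin 3) (Fin 3) ℂ) 0 1,0;0,0,0;0,0,0] := by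
    ext i j
    fin_cases i <;> fin_cases j <;>
      simp [Matrix.vecHead, Matrix.vecTail] <;>
      exact diag_entry_zero k12 _ _ (by norm_num [Matrix.cons_val_two, Matrix.vecHead, Matrix.vecTail])
  have val20 : Dm * (e20 : Matrix (Fin 3) (Fin 3) ℂ) * Dim = (5 : ℂ) • (e20 : Matrix (Fin 3) (Fin 3) ℂ) := by
    ext i j; fin_cases i <;> fin_cases j <;>
      norm_num [Matrix.cons_val_two, Dm, Dim, e20, msl, Matrix.mul_apply, Fin.sum_univ_three, Matrix.vecHead, Matrix.vecTail]
  have k20 := key e20 (5 : ℂ) val20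
  have s20 : ((φ e20 : sl3) : Matrix (Fin 3) (Fin 3) ℂ) =
      !![0,0,0;0,0,0;((φ e20 : sl3) : Matrix (Fin 3) (Fin 3) ℂ) 2 0,0,0] := by
    ext i j
    fin_cases i <;> fin_cases j <;>
      simp [Matrix.vecHead, Matrix.vecTail] <;>
      exact diag_entry_zero k20 _ _ (by norm_num [Matrix.cons_val_two, Matrix.vecHead, Matrix.vecTail])
  have val21 : Dm * (e21 : Matrix (Fin 3) (Fin 3) ℂ) * Dim = (5/2 : ℂ) • (e21 : Matrix (Fin 3) (Fin 3) ℂ) := by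
    ext i j; fin_cases i <;> fin_cases j <;>
      norm_num [Matrix.cons_val_two, Dm, Dim, e21, msl, Matrix.mul_apply, Fin.sum_univ_three, Matrix.vecHead, Matrix.vecTail]
  have k21 := key e21 (5/2 : ℂ) val21
  have s21 : ((φ e21 : sl3) : Matrix (Fin 3) (Fin 3) ℂ) =
      !![0,0,0;((φ e21 : sl3) : Matrix (Fin 3) (Fin 3) ℂ) 1 0,0,0;0,0,0] := by
    ext i j
    fin_cases i <;> fin_cases j <;>
      simp [Matrix.vecHead, Matrix.vecTail] <;>
      exact diag_entry_zero k21 _ _ (by norm_num [Matrix.cons_val_two, Matrix.vecHead, Matrix.vecTail])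
  have valh2 : Dm * (h2 : Matrix (Fin 3) (Fin 3) ℂ) * Dim = ((1:ℂ)) • (h2 : Matrix (Fin 3) (Fin 3) ℂ) := by
    ext i j; fin_cases i <;> fin_cases j <;>
      norm_num [Matrix.cons_val_two, Dm, Dim, h2, msl, Matrix.mul_apply, Fin.sum_univ_three, Matrix.vecHead, Matrix.vecTail]
  have kh2 := key h2 1 valh2
  have th2 : ((φ h2 : sl3) : Matrix (Fin 3) (Fin 3) ℂ) 0 0 + ((φ h2 : sl3) : Matrix (Fin 3) (Fin 3) ℂ) 1 1
      + ((φ h2 : sl3) : Matrix (Fin 3) (Fin 3) ℂ) 2 2 = 0 := by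
    have hm' : ((φ h2 : sl3) : Matrix (Fin 3) (Fin 3) ℂ).trace = 0 :=
      LinearMap.mem_ker.mp (φ h2).2
    rw [Matrix.trace_fin_three] at hm'
    exact hm'
  have sh2 : ((φ h2 : sl3) : Matrix (Fin 3) (Fin 3) ℂ) =
      !![((φ h2 : sl3) : Matrix (Fin 3) (Fin 3) ℂ) 0 0,0,0;
         0,((φ h2 : sl3) : Matrix (Fin 3) (Fin 3) ℂ) 1 1,0;
         0,0,-((φ h2 : sl3) : Matrix (Fin 3) (Fin 3) ℂ) 0 0 - ((φ h2 : sl3) : Matrix (Fin 3) (Fin 3) ℂ) 1 1] := by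
    ext i j
    fin_cases i <;> fin_cases j <;>
      simp [Matrix.vecHead, Matrix.vecTail] <;>
      first
        | exact diag_entry_zero kh2 _ _ (by norm_num [Matrix.cons_val_two, Matrix.vecHead, Matrix.vecTail])
        | linear_combination th2
  -- step 3: unipotent relations
  have hU1 := hequiv g1 e10 (e10 + h1 - e01) (by
    show ((e10 : Matrix (Fin 3) (Fin 3) ℂ) + ↑h1 - ↑e01) = _
    ext i j; fin_cases i <;> fin_cases j <;>
      norm_num [Matrix.cons_val_two, g1, glmk, e10, h1, e01, msl, Matrix.mul_apply, Fin.sum_univ_three,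
        Matrix.vecHead, Matrix.vecTail])
  have hL1 : φ (e10 + h1 - e01) = φ e10 + φ h1 - φ e01 := by rw [map_sub, map_add]
  rw [hL1] at hU1
  have hco1 : ((φ e10 + φ h1 - φ e01 : sl3) : Matrix (Fin 3) (Fin 3) ℂ)
      = ((φ e10 : sl3) : Matrix (Fin 3) (Fin 3) ℂ) + ((φ h1 : sl3) : Matrix (Fin 3) (Fin 3) ℂ)
        - ((φ e01 : sl3) : Matrix (Fin 3) (Fin 3) ℂ) := rfl
  rw [hco1, s10, sh1, s01] at hU1
  have hg1a : ((g1 : GL (Fin 3) ℂ) : Matrix (Fin 3) (Fin 3) ℂ) = !![1,1,0;0,1,0;0,0,1] := rfl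
  have hg1b : ((g1⁻¹ : GL (Fin 3) ℂ) : Matrix (Fin 3) (Fin 3) ℂ) = !![1,-1,0;0,1,0;0,0,1] := rfl
  rw [hg1a, hg1b] at hU1
  have F1 : ((φ e01 : sl3) : Matrix (Fin 3) (Fin 3) ℂ) 1 2 = ((φ e10 : sl3) : Matrix (Fin 3) (Fin 3) ℂ) 2 1 := by
    have q := congrFun (congrFun hU1 1) 2
    simp [J3, Matrix.mul_apply, Fin.sum_univ_three, Matrix.vecHead, Matrix.vecTail, Matrix.vecMul, dotProduct] at q
    first | linear_combination q | linear_combination -q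
  have F2 : ((φ h1 : sl3) : Matrix (Fin 3) (Fin 3) ℂ) 0 0 = 0 := by
    have q := congrFun (congrFun hU1 0) 0
    simp [J3, Matrix.mul_apply, Fin.sum_univ_three, Matrix.vecHead, Matrix.vecTail, Matrix.vecMul, dotProduct] at q
    first | linear_combination q | linear_combination -q
  have F3 : ((φ h1 : sl3) : Matrix (Fin 3) (Fin 3) ℂ) 1 1 = -(((φ e10 : sl3) : Matrix (Fin 3) (Fin 3) ℂ) 2 1) := by
    have q := congrFun (congrFun hU1 1) 1
    simp [J3, Matrix.mul_apply, Fin.sum_univ_three, Matrix.vecHead, Matrix.vecTail, Matrix.vecMul, dotProduct] at q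
    first | linear_combination q | linear_combination -q
  -- block 2
  have hU2 := hequiv g2 e21 (e21 + h2 - e12) (by
    show ((e21 : Matrix (Fin 3) (Fin 3) ℂ) + ↑h2 - ↑e12) = _
    ext i j; fin_cases i <;> fin_cases j <;>
      norm_num [Matrix.cons_val_two, g2, glmk, e21, h2, e12, msl, Matrix.mul_apply, Fin.sum_univ_three,
        Matrix.vecHead, Matrix.vecTail])
  have hL2 : φ (e21 + h2 - e12) = φ e21 + φ h2 - φ e12 := by rw [map_sub, map_add]
  rw [hL2] at hU2
  have hco2 : ((φ e21 + φ h2 - φ e12 : sl3) : Matrix (Fin 3) (Fin 3) ℂ)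
      = ((φ e21 : sl3) : Matrix (Fin 3) (Fin 3) ℂ) + ((φ h2 : sl3) : Matrix (Fin 3) (Fin 3) ℂ) - ((φ e12 : sl3) : Matrix (Fin 3) (Fin 3) ℂ) := rfl
  rw [hco2, s21, sh2, s12] at hU2
  have hg2a : ((g2 : GL (Fin 3) ℂ) : Matrix (Fin 3) (Fin 3) ℂ) = !![1,0,0;0,1,1;0,0,1] := rfl
  have hg2b : ((g2⁻¹ : GL (Fin 3) ℂ) : Matrix (Fin 3) (Fin 3) ℂ) = !![1,0,0;0,1,-1;0,0,1] := rfl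
  rw [hg2a, hg2b] at hU2
  have F4 : ((φ e12 : sl3) : Matrix (Fin 3) (Fin 3) ℂ) 0 1 = ((φ e21 : sl3) : Matrix (Fin 3) (Fin 3) ℂ) 1 0 := by
    have q := congrFun (congrFun hU2 0) 1
    simp [J3, Matrix.mul_apply, Fin.sum_univ_three, Matrix.vecHead, Matrix.vecTail, Matrix.vecMul, dotProduct] at q
    first | linear_combination q | linear_combination -q
  have F5 : ((φ h2 : sl3) : Matrix (Fin 3) (Fin 3) ℂ) 0 0 = -(((φ e21 : sl3) : Matrix (Fin 3) (Fin 3) ℂ) 1 0) := by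
    have q := congrFun (congrFun hU2 0) 0
    simp [J3, Matrix.mul_apply, Fin.sum_univ_three, Matrix.vecHead, Matrix.vecTail, Matrix.vecMul, dotProduct] at q
    first | linear_combination q | linear_combination -q
  have F6 : ((φ h2 : sl3) : Matrix (Fin 3) (Fin 3) ℂ) 1 1 = ((φ e21 : sl3) : Matrix (Fin 3) (Fin 3) ℂ) 1 0 := by
    have q := congrFun (congrFun hU2 1) 1
    simp [J3, Matrix.mul_apply, Fin.sum_univ_three, Matrix.vecHead, Matrix.vecTail, Matrix.vecMul, dotProduct] at q
    first | linear_combination q | linear_combination -q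
  -- block 3
  have hU3 := hequiv g3 e20 (e20 + h1 + h2 - e02) (by
    show ((e20 : Matrix (Fin 3) (Fin 3) ℂ) + ↑h1 + ↑h2 - ↑e02) = _
    ext i j; fin_cases i <;> fin_cases j <;>
      norm_num [Matrix.cons_val_two, g3, glmk, e20, h1, h2, e02, msl, Matrix.mul_apply, Fin.sum_univ_three,
        Matrix.vecHead, Matrix.vecTail])
  have hL3 : φ (e20 + h1 + h2 - e02) = φ e20 + φ h1 + φ h2 - φ e02 := by
    rw [map_sub, map_add, map_add]
  rw [hL3] at hU3
  have hco3 : ((φ e20 + φ h1 + φ h2 - φ e02 : sl3) : Matrix (Fin 3) (Fin 3) ℂ)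
      = ((φ e20 : sl3) : Matrix (Fin 3) (Fin 3) ℂ) + ((φ h1 : sl3) : Matrix (Fin 3) (Fin 3) ℂ) + ((φ h2 : sl3) : Matrix (Fin 3) (Fin 3) ℂ) - ((φ e02 : sl3) : Matrix (Fin 3) (Fin 3) ℂ) := rfl
  rw [hco3, s20, sh1, sh2, s02] at hU3
  have hg3a : ((g3 : GL (Fin 3) ℂ) : Matrix (Fin 3) (Fin 3) ℂ) = !![1,0,1;0,1,0;0,0,1] := rfl
  have hg3b : ((g3⁻¹ : GL (Fin 3) ℂ) : Matrix (Fin 3) (Fin 3) ℂ) = !![1,0,-1;0,1,0;0,0,1] := rfl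
  rw [hg3a, hg3b] at hU3
  have F7 : ((φ e02 : sl3) : Matrix (Fin 3) (Fin 3) ℂ) 0 2 = ((φ e20 : sl3) : Matrix (Fin 3) (Fin 3) ℂ) 2 0 := by
    have q := congrFun (congrFun hU3 0) 2
    simp [J3, Matrix.mul_apply, Fin.sum_univ_three, Matrix.vecHead, Matrix.vecTail, Matrix.vecMul, dotProduct] at q
    first | linear_combination q | linear_combination -q
  have F8 : ((φ h1 : sl3) : Matrix (Fin 3) (Fin 3) ℂ) 0 0 + ((φ h2 : sl3) : Matrix (Fin 3) (Fin 3) ℂ) 0 0 = -(((φ e20 : sl3) : Matrix (Fin 3) (Fin 3) ℂ) 2 0) := by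
    have q := congrFun (congrFun hU3 0) 0
    simp [J3, Matrix.mul_apply, Fin.sum_univ_three, Matrix.vecHead, Matrix.vecTail, Matrix.vecMul, dotProduct] at q
    first | linear_combination q | linear_combination -q
  have F9 : ((φ h1 : sl3) : Matrix (Fin 3) (Fin 3) ℂ) 1 1 + ((φ h2 : sl3) : Matrix (Fin 3) (Fin 3) ℂ) 1 1 = 0 := by
    have q := congrFun (congrFun hU3 1) 1
    simp [J3, Matrix.mul_apply, Fin.sum_univ_three, Matrix.vecHead, Matrix.vecTail, Matrix.vecMul, dotProduct] at q
    first | linear_combination q | linear_combination -q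
  -- consolidation: all constants equal c := φ(e01) entry (1,2)
  have c10eq : ((φ e10 : sl3) : Matrix (Fin 3) (Fin 3) ℂ) 2 1 = ((φ e01 : sl3) : Matrix (Fin 3) (Fin 3) ℂ) 1 2 := F1.symm
  have c21eq : ((φ e21 : sl3) : Matrix (Fin 3) (Fin 3) ℂ) 1 0 = ((φ e01 : sl3) : Matrix (Fin 3) (Fin 3) ℂ) 1 2 := by linear_combination -F6 + F9 - F3 - F1
  have c12eq : ((φ e12 : sl3) : Matrix (Fin 3) (Fin 3) ℂ) 0 1 = ((φ e01 : sl3) : Matrix (Fin 3) (Fin 3) ℂ) 1 2 := by linear_combination F4 + c21eq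
  have c20eq : ((φ e20 : sl3) : Matrix (Fin 3) (Fin 3) ℂ) 2 0 = ((φ e01 : sl3) : Matrix (Fin 3) (Fin 3) ℂ) 1 2 := by linear_combination F8 - F2 - F5 + c21eq
  have c02eq : ((φ e02 : sl3) : Matrix (Fin 3) (Fin 3) ℂ) 0 2 = ((φ e01 : sl3) : Matrix (Fin 3) (Fin 3) ℂ) 1 2 := by linear_combination F7 + c20eq
  have h1aeq : ((φ h1 : sl3) : Matrix (Fin 3) (Fin 3) ℂ) 1 1 = -(((φ e01 : sl3) : Matrix (Fin 3) (Fin 3) ℂ) 1 2) := by linear_combination F3 - c10eq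
  have h2aeq : ((φ h2 : sl3) : Matrix (Fin 3) (Fin 3) ℂ) 0 0 = -(((φ e01 : sl3) : Matrix (Fin 3) (Fin 3) ℂ) 1 2) := by linear_combination F5 - c21eq
  have h2beq : ((φ h2 : sl3) : Matrix (Fin 3) (Fin 3) ℂ) 1 1 = ((φ e01 : sl3) : Matrix (Fin 3) (Fin 3) ℂ) 1 2 := by linear_combination F6 + c21eq
  -- final formula
  obtain ⟨c, hc⟩ : ∃ c : ℂ, ((φ e01 : sl3) : Matrix (Fin 3) (Fin 3) ℂ) 1 2 = c := ⟨_, rfl⟩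
  rw [hc] at s01 c10eq c12eq c20eq c21eq c02eq h1aeq h2aeq h2beq
  have S10 : ((φ e10 : sl3) : Matrix (Fin 3) (Fin 3) ℂ) = !![0,0,0;0,0,0;0,c,0] := by
    rw [s10, c10eq]
  have S12 : ((φ e12 : sl3) : Matrix (Fin 3) (Fin 3) ℂ) = !![0,c,0;0,0,0;0,0,0] := by
    rw [s12, c12eq]
  have S20 : ((φ e20 : sl3) : Matrix (Fin 3) (Fin 3) ℂ) = !![0,0,0;0,0,0;c,0,0] := by
    rw [s20, c20eq]
  have S21 : ((φ e21 : sl3) : Matrix (Fin 3) (Fin 3) ℂ) = !![0,0,0;c,0,0;0,0,0] := by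
    rw [s21, c21eq]
  have S02 : ((φ e02 : sl3) : Matrix (Fin 3) (Fin 3) ℂ) = !![0,0,c;0,0,0;0,0,0] := by
    rw [s02, c02eq]
  have Sh1 : ((φ h1 : sl3) : Matrix (Fin 3) (Fin 3) ℂ) = !![0,0,0;0,-c,0;0,0,c] := by
    rw [sh1, F2, h1aeq]; norm_num
  have Sh2 : ((φ h2 : sl3) : Matrix (Fin 3) (Fin 3) ℂ) = !![-c,0,0;0,c,0;0,0,0] := by
    rw [sh2, h2aeq, h2beq]; norm_num
  have hform : ∀ X : sl3, ((φ X : sl3) : Matrix (Fin 3) (Fin 3) ℂ)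
      = c • (J3 * (X : Matrix (Fin 3) (Fin 3) ℂ)ᵀ * J3) := by
    intro X
    have tX : (X : Matrix (Fin 3) (Fin 3) ℂ) 0 0 + (X : Matrix (Fin 3) (Fin 3) ℂ) 1 1
        + (X : Matrix (Fin 3) (Fin 3) ℂ) 2 2 = 0 := by
      have hm' : ((X : sl3) : Matrix (Fin 3) (Fin 3) ℂ).trace = 0 := LinearMap.mem_ker.mp X.2
      rw [Matrix.trace_fin_three] at hm'
      exact hm'
    have hdec : X = ((X : Matrix (Fin 3) (Fin 3) ℂ) 0 0) • (h1 + h2)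
        + ((X : Matrix (Fin 3) (Fin 3) ℂ) 1 1) • h2
        + ((X : Matrix (Fin 3) (Fin 3) ℂ) 0 1) • e01
        + ((X : Matrix (Fin 3) (Fin 3) ℂ) 0 2) • e02
        + ((X : Matrix (Fin 3) (Fin 3) ℂ) 1 0) • e10
        + ((X : Matrix (Fin 3) (Fin 3) ℂ) 1 2) • e12
        + ((X : Matrix (Fin 3) (Fin 3) ℂ) 2 0) • e20
        + ((X : Matrix (Fin 3) (Fin 3) ℂ) 2 1) • e21 := by
      apply Subtype.ext
      ext i j
      fin_cases i <;> fin_cases j <;>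
        simp [e01, e02, e10, e12, e20, e21, h1, h2, msl, Matrix.add_apply, Matrix.smul_apply,
          Matrix.vecHead, Matrix.vecTail] <;>
        linear_combination tX
    calc ((φ X : sl3) : Matrix (Fin 3) (Fin 3) ℂ)
        = ((φ (((X : Matrix (Fin 3) (Fin 3) ℂ) 0 0) • (h1 + h2)
        + ((X : Matrix (Fin 3) (Fin 3) ℂ) 1 1) • h2
        + ((X : Matrix (Fin 3) (Fin 3) ℂ) 0 1) • e01
        + ((X : Matrix (Fin 3) (Fin 3) ℂ) 0 2) • e02
        + ((X : Matrix (Fin 3) (Fin 3) ℂ) 1 0) • e10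
        + ((X : Matrix (Fin 3) (Fin 3) ℂ) 1 2) • e12
        + ((X : Matrix (Fin 3) (Fin 3) ℂ) 2 0) • e20
        + ((X : Matrix (Fin 3) (Fin 3) ℂ) 2 1) • e21) : sl3) : Matrix (Fin 3) (Fin 3) ℂ) := by
          rw [← hdec]
      _ = c • (J3 * (X : Matrix (Fin 3) (Fin 3) ℂ)ᵀ * J3) := by
          simp only [map_add, _root_.map_smul]
          conv_rhs => rw [Matrix.eta_fin_three ((X : sl3) : Matrix (Fin 3) (Fin 3) ℂ)]
          ext i j
          fin_cases i <;> fin_cases j <;>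
            simp [S10, S12, S20, S21, S02, Sh1, Sh2, s01, J3, Matrix.mul_apply, Matrix.add_apply,
              Matrix.smul_apply, Matrix.transpose_apply, Fin.sum_univ_three,
              Matrix.vecMul, dotProduct, Matrix.vecHead, Matrix.vecTail] <;>
            first
              | ring1
              | linear_combination c * tX
              | linear_combination (-c) * tX
  -- the constant squares to one
  have hid : φ (φ e01) = e01 := by
    have := LinearMap.ext_iff.mp hinv e01
    simpa using this
  have h2inv := hform (φ e01)
  rw [hid, s01] at h2inv
  have hsq : c * c = 1 := by
    have q := congrFun (congrFun h2inv 0) 1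
    simp [J3, e01, msl, Matrix.mul_apply, Matrix.smul_apply, Matrix.transpose_apply,
      Fin.sum_univ_three, Matrix.vecHead, Matrix.vecTail, Matrix.vecMul, dotProduct] at q
    first | linear_combination q | linear_combination -q
  rcases mul_self_eq_one_iff.mp hsq with hone | hone
  · left; intro X; rw [hform X, hone, one_smul]
  · right; intro X; rw [hform X, hone, neg_one_smul]
end
end

section
/- Let μ ∈ ℂ with μ ≠ 0, let g = diag(μ, 1, μ⁻¹), and let r_μ : sl₃(ℂ) → sl₃(ℂ) be the ℂ-linear endomorphism r_μ(X) = g (ₜX) g⁻¹. Then, as an identity of polynomials in one variable x over ℂ, det(id − x·r_μ) = (1 − μ²x)(1 − μ⁻²x)(1 − μ²x²)(1 − μ⁻²x²)(1 − x²). -/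
open Matrix

noncomputable section

set_option maxHeartbeats 1000000

abbrev W := (Fin 2 → ℂ) × (Fin 2 → ℂ) × (Fin 2 → ℂ) × (Fin 1 → ℂ) × (Fin 1 → ℂ)

def eFun (X : sl3) : W :=
  (![X.1 0 0, X.1 2 2], ![X.1 0 1, X.1 1 2], ![X.1 1 0, X.1 2 1], ![X.1 0 2], ![X.1 2 0])

def mk3 (w : W) : Matrix (Fin 3) (Fin 3) ℂ :=
  !![w.1 0, w.2.1 0, w.2.2.2.1 0;
     w.2.2.1 0, -(w.1 0 + w.1 1), w.2.1 1;
     w.2.2.2.2 0, w.2.2.1 1, w.1 1]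

lemma mk3_mem (w : W) : mk3 w ∈ sl3 := by
  simp [sl3, mk3, Matrix.trace, Fin.sum_univ_three]

def eEquiv : sl3 ≃ₗ[ℂ] W where
  toFun := eFun
  map_add' X Y := by
    refine Prod.ext ?_ (Prod.ext ?_ (Prod.ext ?_ (Prod.ext ?_ ?_))) <;>
      funext i <;> fin_cases i <;> simp [eFun]
  map_smul' c X := by
    refine Prod.ext ?_ (Prod.ext ?_ (Prod.ext ?_ (Prod.ext ?_ ?_))) <;>
      funext i <;> fin_cases i <;> simp [eFun]
  invFun w := ⟨mk3 w, mk3_mem w⟩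
  left_inv X := by
    have hX := X.2
    simp only [sl3, LinearMap.mem_ker, Matrix.traceLinearMap_apply, Matrix.trace,
      Fin.sum_univ_three, Matrix.diag] at hX
    refine Subtype.ext ?_
    ext i j
    fin_cases i <;> fin_cases j <;> simp [mk3, eFun] <;> linear_combination -hX
  right_inv w := by
    refine Prod.ext ?_ (Prod.ext ?_ (Prod.ext ?_ (Prod.ext ?_ ?_))) <;>
      funext i <;> fin_cases i <;> simp [eFun, mk3]

lemma conj_r (μ : ℂ) (hμ : μ ≠ 0) (r : Module.End ℂ sl3)
    (hr : ∀ X : sl3, (r X : Matrix (Fin 3) (Fin 3) ℂ) =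
      Matrix.diagonal ![μ, 1, μ⁻¹] *
        (J3 * (X : Matrix (Fin 3) (Fin 3) ℂ)ᵀ * J3) *
        (Matrix.diagonal ![μ, 1, μ⁻¹])⁻¹) :
    eEquiv.conj r =
      LinearMap.prodMap (Matrix.toLin' !![0,1;1,0])
        (LinearMap.prodMap (Matrix.toLin' !![0,μ;μ,0])
          (LinearMap.prodMap (Matrix.toLin' !![0,μ⁻¹;μ⁻¹,0])
            (LinearMap.prodMap (Matrix.toLin' !![(μ^2 : ℂ)])
              (Matrix.toLin' !![μ⁻¹^2])))) := by
  have hg : (Matrix.diagonal ![μ, 1, μ⁻¹])⁻¹ = Matrix.diagonal ![μ⁻¹, 1, μ] := by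
    apply Matrix.inv_eq_left_inv
    rw [Matrix.diagonal_mul_diagonal]
    ext i j
    fin_cases i <;> fin_cases j <;>
      simp [Matrix.diagonal, Matrix.one_apply, inv_mul_cancel₀ hμ, mul_inv_cancel₀ hμ]
  have hR : ∀ X : sl3, (r X : Matrix (Fin 3) (Fin 3) ℂ) =
      !![X.1 2 2, μ * X.1 1 2, μ^2 * X.1 0 2;
         μ⁻¹ * X.1 2 1, X.1 1 1, μ * X.1 0 1;
         μ⁻¹^2 * X.1 2 0, μ⁻¹ * X.1 1 0, X.1 0 0] := by
    intro X
    rw [hr X, hg]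
    ext i j
    fin_cases i <;> fin_cases j <;>
      (simp [Matrix.mul_apply, Fin.sum_univ_three, J3, Matrix.diagonal_apply,
        Matrix.vecMul, dotProduct]
       try field_simp
       try ring
       try tauto)
  set P := LinearMap.prodMap (Matrix.toLin' !![(0:ℂ),1;1,0])
        (LinearMap.prodMap (Matrix.toLin' !![0,μ;μ,0])
          (LinearMap.prodMap (Matrix.toLin' !![0,μ⁻¹;μ⁻¹,0])
            (LinearMap.prodMap (Matrix.toLin' !![(μ^2 : ℂ)])
              (Matrix.toLin' !![μ⁻¹^2])))) with hP
  have h2 : ∀ X : sl3, (eEquiv.conj r) (eEquiv X) = P (eEquiv X) := by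
    intro X
    rw [LinearEquiv.conj_apply_apply, LinearEquiv.symm_apply_apply]
    show eFun (r X) = P (eFun X)
    have hRX := hR X
    refine Prod.ext ?_ (Prod.ext ?_ (Prod.ext ?_ (Prod.ext ?_ ?_))) <;>
      funext i <;> fin_cases i <;>
      simp only [eFun, hRX, hP, LinearMap.prodMap_apply, Matrix.toLin'_apply,
        Matrix.mulVec, dotProduct, Fin.sum_univ_two, Fin.sum_univ_one,
        Matrix.cons_val_zero, Matrix.cons_val_one, Matrix.head_cons, Matrix.of_apply,
        Matrix.cons_val', Matrix.empty_val', Matrix.cons_val_fin_one, Prod.map_apply,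
        Matrix.head_fin_const, Fin.isValue, Matrix.cons_val_two, Matrix.tail_cons,
        Fin.mk_zero, Fin.mk_one] <;>
      ring
  apply LinearMap.ext
  intro w
  calc (eEquiv.conj r) w = (eEquiv.conj r) (eEquiv (eEquiv.symm w)) := by
        rw [LinearEquiv.apply_symm_apply]
    _ = P (eEquiv (eEquiv.symm w)) := h2 _
    _ = P w := by rw [LinearEquiv.apply_symm_apply]

lemma my_det_prodMap {M N : Type*} [AddCommGroup M] [Module ℂ M] [AddCommGroup N] [Module ℂ N]
    {ι κ : Type*} [Fintype ι] [Fintype κ] [DecidableEq ι] [DecidableEq κ]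
    (bM : Module.Basis ι ℂ M) (bN : Module.Basis κ ℂ N)
    (f : Module.End ℂ M) (g : Module.End ℂ N) :
    LinearMap.det (f.prodMap g) = LinearMap.det f * LinearMap.det g := by
  rw [← LinearMap.det_toMatrix (bM.prod bN), LinearMap.toMatrix_prodMap,
    Matrix.det_fromBlocks_zero₁₂, LinearMap.det_toMatrix, LinearMap.det_toMatrix]

lemma one_sub_smul_prodMap {M N : Type*} [AddCommGroup M] [Module ℂ M] [AddCommGroup N]
    [Module ℂ N] (x : ℂ) (f : Module.End ℂ M) (g : Module.End ℂ N) :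
    (1 : Module.End ℂ (M × N)) - x • (f.prodMap g) = (1 - x • f).prodMap (1 - x • g) := by
  apply LinearMap.ext
  intro p
  simp [Prod.ext_iff]

lemma det_one_sub_toLin' {n : ℕ} (x : ℂ) (A : Matrix (Fin n) (Fin n) ℂ) :
    LinearMap.det ((1 : Module.End ℂ (Fin n → ℂ)) - x • Matrix.toLin' A) =
      Matrix.det (1 - x • A) := by
  have h : Matrix.toLin' (1 - x • A) = (1 : Module.End ℂ (Fin n → ℂ)) - x • Matrix.toLin' A := by
    have h2 := LinearMap.map_sub (Matrix.toLin' (R := ℂ) (n := Fin n)).toLinearMap 1 (x • A)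
    have h3 := LinearMap.map_smul (Matrix.toLin' (R := ℂ) (n := Fin n)).toLinearMap x A
    simp only [LinearEquiv.coe_coe] at h2 h3
    rw [h2, h3, Matrix.toLin'_one]
    rfl
  rw [← h, LinearMap.det_toLin']

/-- For `g = diag(μ,1,μ⁻¹)` and `r_μ(X) = g (ₜX) g⁻¹` on `sl₃(ℂ)`,
`det(id − x·r_μ) = (1−μ²x)(1−μ⁻²x)(1−μ²x²)(1−μ⁻²x²)(1−x²)`. -/
theorem stmt2 (μ : ℂ) (hμ : μ ≠ 0) (r : Module.End ℂ sl3)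
    (hr : ∀ X : sl3, (r X : Matrix (Fin 3) (Fin 3) ℂ) =
      Matrix.diagonal ![μ, 1, μ⁻¹] *
        (J3 * (X : Matrix (Fin 3) (Fin 3) ℂ)ᵀ * J3) *
        (Matrix.diagonal ![μ, 1, μ⁻¹])⁻¹) :
    ∀ x : ℂ, LinearMap.det ((1 : Module.End ℂ sl3) - x • r) =
      (1 - μ ^ 2 * x) * (1 - μ⁻¹ ^ 2 * x) *
        (1 - μ ^ 2 * x ^ 2) * (1 - μ⁻¹ ^ 2 * x ^ 2) * (1 - x ^ 2) := by
  intro x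
  have hc := conj_r μ hμ r hr
  have h1 : LinearMap.det ((1 : Module.End ℂ sl3) - x • r) =
      LinearMap.det (eEquiv.conj ((1 : Module.End ℂ sl3) - x • r)) := by
    rw [LinearEquiv.conj_apply, LinearMap.comp_assoc, LinearMap.det_conj]
  have hconj : eEquiv.conj ((1 : Module.End ℂ sl3) - x • r) = 1 - x • eEquiv.conj r := by
    have h2 := LinearMap.map_sub eEquiv.conj.toLinearMap (1 : Module.End ℂ sl3) (x • r)
    have h3 := LinearMap.map_smul eEquiv.conj.toLinearMap x r
    simp only [LinearEquiv.coe_coe] at h2 h3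
    have hone : eEquiv.conj (1 : Module.End ℂ sl3) = 1 := by
      show eEquiv.conj LinearMap.id = _
      rw [LinearEquiv.conj_id]
      rfl
    rw [h2, h3, hone]
  rw [h1, hconj, hc]
  let b1 := Pi.basisFun ℂ (Fin 1)
  let b2 := Pi.basisFun ℂ (Fin 2)
  rw [one_sub_smul_prodMap, my_det_prodMap b2 (b2.prod (b2.prod (b1.prod b1))),
    one_sub_smul_prodMap, my_det_prodMap b2 (b2.prod (b1.prod b1)),
    one_sub_smul_prodMap, my_det_prodMap b2 (b1.prod b1),
    one_sub_smul_prodMap, my_det_prodMap b1 b1,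
    det_one_sub_toLin', det_one_sub_toLin', det_one_sub_toLin',
    det_one_sub_toLin', det_one_sub_toLin']
  simp only [Matrix.det_fin_two, Matrix.det_fin_one, Matrix.sub_apply, Matrix.smul_apply,
    Matrix.one_apply, Matrix.cons_val_zero, Matrix.cons_val_one, Matrix.head_cons,
    Matrix.of_apply, Matrix.cons_val', Matrix.empty_val', Matrix.cons_val_fin_one,
    smul_eq_mul, Matrix.head_fin_const]
  norm_num
  ring
end
end

section
/- In the ring of formal power series in three variables X, T₁, T₂ over ℤ, the following identity holds: (∑ (∑_{i=0}^{min(m₁,m₂)} X^i) · X^{max(m₁,m₂)} · T₁^{m₁} T₂^{m₂}) · (1 − T₁T₂X)(1 − T₁T₂X²)(1 − T₁³X³)(1 − T₂³X³) = 1 − T₁³T₂³X⁶, where the sum ranges over all pairs of nonnegative integers (m₁, m₂) with m₁ − m₂ divisible by 3. -/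
open MvPowerSeries Finset

/-- exponent vector -/
noncomputable def Dex (a b c : ℕ) : Fin 3 →₀ ℕ :=
  Finsupp.single 0 a + Finsupp.single 1 b + Finsupp.single 2 c

lemma Dex_apply0 (a b c : ℕ) : Dex a b c 0 = a := by
  simp [Dex, Finsupp.single_apply]

lemma Dex_apply1 (a b c : ℕ) : Dex a b c 1 = b := by
  simp [Dex, Finsupp.single_apply]

lemma Dex_apply2 (a b c : ℕ) : Dex a b c 2 = c := by
  simp [Dex, Finsupp.single_apply]

lemma Dex_le_iff (a b c : ℕ) (e : Fin 3 →₀ ℕ) :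
    Dex a b c ≤ e ↔ a ≤ e 0 ∧ b ≤ e 1 ∧ c ≤ e 2 := by
  rw [Finsupp.le_def]
  constructor
  · intro h
    refine ⟨?_, ?_, ?_⟩
    · simpa [Dex_apply0] using h 0
    · simpa [Dex_apply1] using h 1
    · simpa [Dex_apply2] using h 2
  · rintro ⟨h0, h1, h2⟩ i
    fin_cases i
    · simpa [Dex_apply0] using h0
    · simpa [Dex_apply1] using h1
    · simpa [Dex_apply2] using h2

lemma sub_Dex_apply0 (a b c : ℕ) (e : Fin 3 →₀ ℕ) : (e - Dex a b c) 0 = e 0 - a := by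
  rw [Finsupp.tsub_apply, Dex_apply0]

lemma sub_Dex_apply1 (a b c : ℕ) (e : Fin 3 →₀ ℕ) : (e - Dex a b c) 1 = e 1 - b := by
  rw [Finsupp.tsub_apply, Dex_apply1]

lemma sub_Dex_apply2 (a b c : ℕ) (e : Fin 3 →₀ ℕ) : (e - Dex a b c) 2 = e 2 - c := by
  rw [Finsupp.tsub_apply, Dex_apply2]

lemma eq_Dex_iff (a b c : ℕ) (e : Fin 3 →₀ ℕ) :
    e = Dex a b c ↔ e 0 = a ∧ e 1 = b ∧ e 2 = c := by
  constructor
  · rintro rfl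
    exact ⟨Dex_apply0 a b c, Dex_apply1 a b c, Dex_apply2 a b c⟩
  · rintro ⟨h0, h1, h2⟩
    ext i
    fin_cases i
    · simpa [Dex_apply0] using h0
    · simpa [Dex_apply1] using h1
    · simpa [Dex_apply2] using h2

lemma eq_zero_iff (e : Fin 3 →₀ ℕ) :
    e = 0 ↔ e 0 = 0 ∧ e 1 = 0 ∧ e 2 = 0 := by
  have := eq_Dex_iff 0 0 0 e
  simpa [Dex] using this

lemma mon111 : (X 1 * X 2 * X 0 : MvPowerSeries (Fin 3) ℤ) = monomial (Dex 1 1 1) 1 := by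
  have hd : ((Finsupp.single 1 1 + Finsupp.single 2 1) + Finsupp.single 0 1 : Fin 3 →₀ ℕ)
      = Dex 1 1 1 := by
    ext i; fin_cases i <;> simp [Dex, Finsupp.single_apply]
  rw [show (X 1 : MvPowerSeries (Fin 3) ℤ) = monomial (Finsupp.single 1 1) 1 from rfl,
    show (X 2 : MvPowerSeries (Fin 3) ℤ) = monomial (Finsupp.single 2 1) 1 from rfl,
    show (X 0 : MvPowerSeries (Fin 3) ℤ) = monomial (Finsupp.single 0 1) 1 from rfl,
    monomial_mul_monomial, monomial_mul_monomial, hd, one_mul, one_mul]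

lemma mon211 : (X 1 * X 2 * (X 0) ^ 2 : MvPowerSeries (Fin 3) ℤ) = monomial (Dex 2 1 1) 1 := by
  have hd : ((Finsupp.single 1 1 + Finsupp.single 2 1) + Finsupp.single 0 2 : Fin 3 →₀ ℕ)
      = Dex 2 1 1 := by
    ext i; fin_cases i <;> simp [Dex, Finsupp.single_apply]
  rw [show (X 1 : MvPowerSeries (Fin 3) ℤ) = monomial (Finsupp.single 1 1) 1 from rfl,
    show (X 2 : MvPowerSeries (Fin 3) ℤ) = monomial (Finsupp.single 2 1) 1 from rfl,
    X_pow_eq, monomial_mul_monomial, monomial_mul_monomial, hd, one_mul, one_mul]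

lemma mon330 : ((X 1) ^ 3 * (X 0) ^ 3 : MvPowerSeries (Fin 3) ℤ) = monomial (Dex 3 3 0) 1 := by
  have hd : (Finsupp.single (1 : Fin 3) 3 + Finsupp.single 0 3 : Fin 3 →₀ ℕ) = Dex 3 3 0 := by
    ext i; fin_cases i <;> simp [Dex, Finsupp.single_apply]
  rw [X_pow_eq, X_pow_eq, monomial_mul_monomial, hd, one_mul]

lemma mon303 : ((X 2) ^ 3 * (X 0) ^ 3 : MvPowerSeries (Fin 3) ℤ) = monomial (Dex 3 0 3) 1 := by
  have hd : (Finsupp.single (2 : Fin 3) 3 + Finsupp.single 0 3 : Fin 3 →₀ ℕ) = Dex 3 0 3 := by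
    ext i; fin_cases i <;> simp [Dex, Finsupp.single_apply]
  rw [X_pow_eq, X_pow_eq, monomial_mul_monomial, hd, one_mul]

lemma mon633 : ((X 1) ^ 3 * (X 2) ^ 3 * (X 0) ^ 6 : MvPowerSeries (Fin 3) ℤ) = monomial (Dex 6 3 3) 1 := by
  have hd : ((Finsupp.single 1 3 + Finsupp.single 2 3) + Finsupp.single 0 6 : Fin 3 →₀ ℕ)
      = Dex 6 3 3 := by
    ext i; fin_cases i <;> simp [Dex, Finsupp.single_apply]
  rw [X_pow_eq, X_pow_eq, X_pow_eq, monomial_mul_monomial, monomial_mul_monomial, hd,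
    one_mul, one_mul]

lemma coeff_mul_one_sub (f : MvPowerSeries (Fin 3) ℤ) (d e : Fin 3 →₀ ℕ) :
    MvPowerSeries.coeff e (f * (1 - monomial d 1)) =
      MvPowerSeries.coeff e f -
        (if d ≤ e then MvPowerSeries.coeff (e - d) f else 0) := by
  rw [mul_sub, mul_one, map_sub, coeff_mul_monomial]
  split_ifs <;> simp

/-- auxiliary middle series -/
noncomputable def Qser : MvPowerSeries (Fin 3) ℤ :=
  fun e => if (e 1 = 0 ∨ e 2 = 0) ∧ 3 ∣ e 1 ∧ 3 ∣ e 2 ∧ e 0 = e 1 + e 2 then 1 else 0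

lemma coeff_Qser (e : Fin 3 →₀ ℕ) :
    MvPowerSeries.coeff e Qser =
      if (e 1 = 0 ∨ e 2 = 0) ∧ 3 ∣ e 1 ∧ 3 ∣ e 2 ∧ e 0 = e 1 + e 2 then 1 else 0 :=
  rfl

lemma card_eq (n m1 m2 : ℕ) :
    ((((Finset.range (min m1 m2 + 1)).filter
        (fun i => i + max m1 m2 = n)).card : ℕ) : ℤ) =
      if m1 ≤ n ∧ m2 ≤ n ∧ n ≤ m1 + m2 then 1 else 0 := by
  split_ifs with h
  · rw [show ((Finset.range (min m1 m2 + 1)).filter (fun i => i + max m1 m2 = n))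
        = {n - max m1 m2} from ?_]
    · simp
    · ext i
      simp only [Finset.mem_filter, Finset.mem_range, Finset.mem_singleton]
      omega
  · rw [show ((Finset.range (min m1 m2 + 1)).filter (fun i => i + max m1 m2 = n))
        = ∅ from ?_]
    · simp
    · ext i
      simp only [Finset.mem_filter, Finset.mem_range, Finset.notMem_empty, iff_false]
      omega

lemma ite_merge (d c : Prop) [Decidable d] [Decidable c] (x : ℤ) :
    (if d then (if c then x else 0) else 0) = if d ∧ c then x else 0 := by
  split_ifs <;> simp_all

set_option maxHeartbeats 1000000 in
set_option linter.unusedVariables false in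
lemma keyA (n p q : ℕ) :
    ((if p % 3 = q % 3 ∧ p ≤ n ∧ q ≤ n ∧ n ≤ p + q then (1:ℤ) else 0) -
        (if (1 ≤ n ∧ 1 ≤ p ∧ 1 ≤ q) ∧ (p - 1) % 3 = (q - 1) % 3 ∧
            p - 1 ≤ n - 1 ∧ q - 1 ≤ n - 1 ∧ n - 1 ≤ p - 1 + (q - 1) then (1:ℤ) else 0)) -
      (if 2 ≤ n ∧ 1 ≤ p ∧ 1 ≤ q then
        ((if (p - 1) % 3 = (q - 1) % 3 ∧ p - 1 ≤ n - 2 ∧ q - 1 ≤ n - 2 ∧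
            n - 2 ≤ p - 1 + (q - 1) then (1:ℤ) else 0) -
          (if (1 ≤ n - 2 ∧ 1 ≤ p - 1 ∧ 1 ≤ q - 1) ∧ (p - 1 - 1) % 3 = (q - 1 - 1) % 3 ∧
              p - 1 - 1 ≤ n - 2 - 1 ∧ q - 1 - 1 ≤ n - 2 - 1 ∧
              n - 2 - 1 ≤ p - 1 - 1 + (q - 1 - 1) then (1:ℤ) else 0))
      else 0) =
    (if (p = 0 ∨ q = 0) ∧ 3 ∣ p ∧ 3 ∣ q ∧ n = p + q then (1:ℤ) else 0) := by
  by_cases hD : p % 3 = q % 3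
  · simp only [show (p % 3 = q % 3 ∧ p ≤ n ∧ q ≤ n ∧ n ≤ p + q) ↔
        (p ≤ n ∧ q ≤ n ∧ n ≤ p + q) from by omega,
      show ((1 ≤ n ∧ 1 ≤ p ∧ 1 ≤ q) ∧ (p - 1) % 3 = (q - 1) % 3 ∧
            p - 1 ≤ n - 1 ∧ q - 1 ≤ n - 1 ∧ n - 1 ≤ p - 1 + (q - 1)) ↔
        ((1 ≤ n ∧ 1 ≤ p ∧ 1 ≤ q) ∧ p - 1 ≤ n - 1 ∧ q - 1 ≤ n - 1 ∧
            n - 1 ≤ p - 1 + (q - 1)) from by omega,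
      show ((p - 1) % 3 = (q - 1) % 3 ∧ p - 1 ≤ n - 2 ∧ q - 1 ≤ n - 2 ∧
            n - 2 ≤ p - 1 + (q - 1)) ↔
        (((1 ≤ p ∧ 1 ≤ q) ∨ (p = 0 ∧ q = 0)) ∧ p - 1 ≤ n - 2 ∧ q - 1 ≤ n - 2 ∧
            n - 2 ≤ p - 1 + (q - 1)) from by omega,
      show ((1 ≤ n - 2 ∧ 1 ≤ p - 1 ∧ 1 ≤ q - 1) ∧ (p - 1 - 1) % 3 = (q - 1 - 1) % 3 ∧
            p - 1 - 1 ≤ n - 2 - 1 ∧ q - 1 - 1 ≤ n - 2 - 1 ∧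
            n - 2 - 1 ≤ p - 1 - 1 + (q - 1 - 1)) ↔
        ((1 ≤ n - 2 ∧ 1 ≤ p - 1 ∧ 1 ≤ q - 1) ∧
            p - 1 - 1 ≤ n - 2 - 1 ∧ q - 1 - 1 ≤ n - 2 - 1 ∧
            n - 2 - 1 ≤ p - 1 - 1 + (q - 1 - 1)) from by omega,
      show ((p = 0 ∨ q = 0) ∧ 3 ∣ p ∧ 3 ∣ q ∧ n = p + q) ↔
        ((p = 0 ∨ q = 0) ∧ n = p + q) from by omega, if_false]
    clear hD
    split_ifs <;> omega
  · simp only [show (p % 3 = q % 3 ∧ p ≤ n ∧ q ≤ n ∧ n ≤ p + q) ↔ False from by simp only [iff_false]; omega,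
      show ((1 ≤ n ∧ 1 ≤ p ∧ 1 ≤ q) ∧ (p - 1) % 3 = (q - 1) % 3 ∧
            p - 1 ≤ n - 1 ∧ q - 1 ≤ n - 1 ∧ n - 1 ≤ p - 1 + (q - 1)) ↔ False from by simp only [iff_false]; omega,
      show ((p - 1) % 3 = (q - 1) % 3 ∧ p - 1 ≤ n - 2 ∧ q - 1 ≤ n - 2 ∧
            n - 2 ≤ p - 1 + (q - 1)) ↔
        (((p = 0 ∧ q % 3 = 1) ∨ (q = 0 ∧ p % 3 = 1)) ∧ p - 1 ≤ n - 2 ∧ q - 1 ≤ n - 2 ∧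
            n - 2 ≤ p - 1 + (q - 1)) from by omega,
      show ((1 ≤ n - 2 ∧ 1 ≤ p - 1 ∧ 1 ≤ q - 1) ∧ (p - 1 - 1) % 3 = (q - 1 - 1) % 3 ∧
            p - 1 - 1 ≤ n - 2 - 1 ∧ q - 1 - 1 ≤ n - 2 - 1 ∧
            n - 2 - 1 ≤ p - 1 - 1 + (q - 1 - 1)) ↔ False from by simp only [iff_false]; omega,
      show ((p = 0 ∨ q = 0) ∧ 3 ∣ p ∧ 3 ∣ q ∧ n = p + q) ↔ False from by simp only [iff_false]; omega, if_false]
    clear hD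
    split_ifs <;> omega

set_option maxHeartbeats 1000000 in
set_option linter.unusedVariables false in
lemma keyB (n p q : ℕ) :
    ((if (p = 0 ∨ q = 0) ∧ 3 ∣ p ∧ 3 ∣ q ∧ n = p + q then (1:ℤ) else 0) -
        (if 3 ≤ n ∧ 3 ≤ p ∧ 0 ≤ q then
          (if (p - 3 = 0 ∨ q = 0) ∧ 3 ∣ (p - 3) ∧ 3 ∣ q ∧ n - 3 = p - 3 + q then (1:ℤ) else 0)
        else 0)) -
      (if 3 ≤ n ∧ 0 ≤ p ∧ 3 ≤ q then
        ((if (p = 0 ∨ q - 3 = 0) ∧ 3 ∣ p ∧ 3 ∣ (q - 3) ∧ n - 3 = p + (q - 3) then (1:ℤ) else 0) -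
          (if 3 ≤ n - 3 ∧ 3 ≤ p ∧ 0 ≤ q - 3 then
            (if (p - 3 = 0 ∨ q - 3 = 0) ∧ 3 ∣ (p - 3) ∧ 3 ∣ (q - 3) ∧
                n - 3 - 3 = p - 3 + (q - 3) then (1:ℤ) else 0)
          else 0))
      else 0) =
    (if n = 0 ∧ p = 0 ∧ q = 0 then (1:ℤ) else 0) -
      (if n = 6 ∧ p = 3 ∧ q = 3 then (1:ℤ) else 0) := by
  by_cases hp : 3 ∣ p <;> by_cases hq : 3 ∣ q
  · simp only [show ((p = 0 ∨ q = 0) ∧ 3 ∣ p ∧ 3 ∣ q ∧ n = p + q) ↔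
        ((p = 0 ∨ q = 0) ∧ n = p + q) from by omega,
      show ((p - 3 = 0 ∨ q = 0) ∧ 3 ∣ (p - 3) ∧ 3 ∣ q ∧ n - 3 = p - 3 + q) ↔
        ((p - 3 = 0 ∨ q = 0) ∧ n - 3 = p - 3 + q) from by omega,
      show ((p = 0 ∨ q - 3 = 0) ∧ 3 ∣ p ∧ 3 ∣ (q - 3) ∧ n - 3 = p + (q - 3)) ↔
        ((p = 0 ∨ q - 3 = 0) ∧ n - 3 = p + (q - 3)) from by omega,
      show ((p - 3 = 0 ∨ q - 3 = 0) ∧ 3 ∣ (p - 3) ∧ 3 ∣ (q - 3) ∧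
            n - 3 - 3 = p - 3 + (q - 3)) ↔
        ((p - 3 = 0 ∨ q - 3 = 0) ∧ n - 3 - 3 = p - 3 + (q - 3)) from by omega, if_false]
    obtain ⟨a, rfl⟩ := hp
    obtain ⟨b, rfl⟩ := hq
    split_ifs <;> omega
  · simp only [show ((p = 0 ∨ q = 0) ∧ 3 ∣ p ∧ 3 ∣ q ∧ n = p + q) ↔ False from by simp only [iff_false]; omega,
      show ((p - 3 = 0 ∨ q = 0) ∧ 3 ∣ (p - 3) ∧ 3 ∣ q ∧ n - 3 = p - 3 + q) ↔ False from by simp only [iff_false]; omega,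
      show ((p = 0 ∨ q - 3 = 0) ∧ 3 ∣ p ∧ 3 ∣ (q - 3) ∧ n - 3 = p + (q - 3)) ↔
        (q ≤ 2 ∧ (p = 0 ∨ q - 3 = 0) ∧ n - 3 = p + (q - 3)) from by omega,
      show ((p - 3 = 0 ∨ q - 3 = 0) ∧ 3 ∣ (p - 3) ∧ 3 ∣ (q - 3) ∧
            n - 3 - 3 = p - 3 + (q - 3)) ↔
        (q ≤ 2 ∧ (p - 3 = 0 ∨ q - 3 = 0) ∧ n - 3 - 3 = p - 3 + (q - 3)) from by omega,
      show (n = 0 ∧ p = 0 ∧ q = 0) ↔ False from by simp only [iff_false]; omega,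
      show (n = 6 ∧ p = 3 ∧ q = 3) ↔ False from by simp only [iff_false]; omega, if_false]
    obtain ⟨a, rfl⟩ := hp
    obtain ⟨b, hb⟩ : ∃ b, q = 3*b+1 ∨ q = 3*b+2 := ⟨q / 3, by omega⟩
    clear hq
    split_ifs <;> omega
  · simp only [show ((p = 0 ∨ q = 0) ∧ 3 ∣ p ∧ 3 ∣ q ∧ n = p + q) ↔ False from by simp only [iff_false]; omega,
      show ((p - 3 = 0 ∨ q = 0) ∧ 3 ∣ (p - 3) ∧ 3 ∣ q ∧ n - 3 = p - 3 + q) ↔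
        (p ≤ 2 ∧ (p - 3 = 0 ∨ q = 0) ∧ n - 3 = p - 3 + q) from by omega,
      show ((p = 0 ∨ q - 3 = 0) ∧ 3 ∣ p ∧ 3 ∣ (q - 3) ∧ n - 3 = p + (q - 3)) ↔ False from by simp only [iff_false]; omega,
      show ((p - 3 = 0 ∨ q - 3 = 0) ∧ 3 ∣ (p - 3) ∧ 3 ∣ (q - 3) ∧
            n - 3 - 3 = p - 3 + (q - 3)) ↔
        (p ≤ 2 ∧ (p - 3 = 0 ∨ q - 3 = 0) ∧ n - 3 - 3 = p - 3 + (q - 3)) from by omega,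
      show (n = 0 ∧ p = 0 ∧ q = 0) ↔ False from by simp only [iff_false]; omega,
      show (n = 6 ∧ p = 3 ∧ q = 3) ↔ False from by simp only [iff_false]; omega, if_false]
    obtain ⟨b, rfl⟩ := hq
    obtain ⟨a, ha⟩ : ∃ a, p = 3*a+1 ∨ p = 3*a+2 := ⟨p / 3, by omega⟩
    clear hp
    split_ifs <;> omega
  · simp only [show ((p = 0 ∨ q = 0) ∧ 3 ∣ p ∧ 3 ∣ q ∧ n = p + q) ↔ False from by simp only [iff_false]; omega,
      show ((p - 3 = 0 ∨ q = 0) ∧ 3 ∣ (p - 3) ∧ 3 ∣ q ∧ n - 3 = p - 3 + q) ↔ False from by simp only [iff_false]; omega,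
      show ((p = 0 ∨ q - 3 = 0) ∧ 3 ∣ p ∧ 3 ∣ (q - 3) ∧ n - 3 = p + (q - 3)) ↔ False from by simp only [iff_false]; omega,
      show ((p - 3 = 0 ∨ q - 3 = 0) ∧ 3 ∣ (p - 3) ∧ 3 ∣ (q - 3) ∧
            n - 3 - 3 = p - 3 + (q - 3)) ↔
        (p ≤ 2 ∧ q ≤ 2 ∧ n - 3 - 3 = p - 3 + (q - 3)) from by omega,
      show (n = 0 ∧ p = 0 ∧ q = 0) ↔ False from by simp only [iff_false]; omega,
      show (n = 6 ∧ p = 3 ∧ q = 3) ↔ False from by simp only [iff_false]; omega, if_false]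
    obtain ⟨a, ha⟩ : ∃ a, p = 3*a+1 ∨ p = 3*a+2 := ⟨p / 3, by omega⟩
    clear hp
    obtain ⟨b, hb⟩ : ∃ b, q = 3*b+1 ∨ q = 3*b+2 := ⟨q / 3, by omega⟩
    clear hq
    split_ifs <;> omega


theorem stepA (S : MvPowerSeries (Fin 3) ℤ)
    (hS : ∀ e : Fin 3 →₀ ℕ, MvPowerSeries.coeff e S =
      if (3 : ℤ) ∣ ((e 1 : ℤ) - (e 2 : ℤ)) then
        (((Finset.range (min (e 1) (e 2) + 1)).filter
            (fun i => i + max (e 1) (e 2) = e 0)).card : ℤ)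
      else 0) :
    S * (1 - X 1 * X 2 * X 0) * (1 - X 1 * X 2 * (X 0) ^ 2) = Qser := by
  apply MvPowerSeries.ext
  intro e
  rw [mon111, mon211, coeff_Qser]
  simp only [coeff_mul_one_sub]
  simp only [hS, card_eq, Dex_le_iff, sub_Dex_apply0, sub_Dex_apply1, sub_Dex_apply2]
  have hmod : ∀ a b : ℕ, ((3:ℤ) ∣ (a:ℤ) - (b:ℤ)) ↔ a % 3 = b % 3 := by intro a b; omega
  simp only [hmod, ite_merge]
  exact keyA (e 0) (e 1) (e 2)

theorem stepB :
    (Qser * (1 - (X 1) ^ 3 * (X 0) ^ 3) * (1 - (X 2) ^ 3 * (X 0) ^ 3)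
      : MvPowerSeries (Fin 3) ℤ) =
      1 - (X 1) ^ 3 * (X 2) ^ 3 * (X 0) ^ 6 := by
  apply MvPowerSeries.ext
  intro e
  rw [mon330, mon303, mon633, map_sub,
    MvPowerSeries.coeff_one, MvPowerSeries.coeff_monomial]
  simp only [coeff_mul_one_sub]
  simp only [coeff_Qser, Dex_le_iff, sub_Dex_apply0, sub_Dex_apply1, sub_Dex_apply2,
    eq_Dex_iff, eq_zero_iff, Nat.sub_zero]
  exact keyB (e 0) (e 1) (e 2)

/-- In `ℤ[[X,T₁,T₂]]` (with `X = X 0`, `T₁ = X 1`, `T₂ = X 2`):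
`(∑_{3 ∣ m₁−m₂} (∑_{i=0}^{min(m₁,m₂)} Xⁱ) X^{max(m₁,m₂)} T₁^{m₁} T₂^{m₂})
  ·(1−T₁T₂X)(1−T₁T₂X²)(1−T₁³X³)(1−T₂³X³) = 1 − T₁³T₂³X⁶`.
The series is encoded via its coefficients: the coefficient of
`X^n T₁^{m₁} T₂^{m₂}` is the number of `i` with `0 ≤ i ≤ min(m₁,m₂)` and
`i + max(m₁,m₂) = n`, provided `3 ∣ m₁ − m₂`, and `0` otherwise. -/
theorem stmt3 (S : MvPowerSeries (Fin 3) ℤ)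
    (hS : ∀ e : Fin 3 →₀ ℕ, MvPowerSeries.coeff e S =
      if (3 : ℤ) ∣ ((e 1 : ℤ) - (e 2 : ℤ)) then
        (((Finset.range (min (e 1) (e 2) + 1)).filter
            (fun i => i + max (e 1) (e 2) = e 0)).card : ℤ)
      else 0) :
    S * (1 - X 1 * X 2 * X 0) * (1 - X 1 * X 2 * (X 0) ^ 2) *
        (1 - (X 1) ^ 3 * (X 0) ^ 3) * (1 - (X 2) ^ 3 * (X 0) ^ 3) =
      1 - (X 1) ^ 3 * (X 2) ^ 3 * (X 0) ^ 6 := by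
  rw [stepA S hS, stepB]
end

section
/- In the ring of formal power series in two variables X, T over ℤ, the following identity holds: (1 − X³)(1 − TX)(1 − TX²) · ∑_{k₁,k₂ ≥ 0} ∑_{i=0}^{min(k₁,k₂)} X^{k₁+2k₂} T^{k₁+k₂−2i} = 1. -/
open MvPowerSeries Finset

private def cnt (n m : ℕ) : ℕ :=
  ((Finset.range (n+1)).filter (fun i => n ≤ 2*m + 3*i ∧ m + 3*i ≤ n)).card

private def B (n m : ℕ) : ℤ := if m ≤ n ∧ (n - m) % 3 = 0 then 1 else 0

private lemma b_id (n m : ℕ) :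
    B n m - (if 1 ≤ n ∧ 1 ≤ m then B (n-1) (m-1) else 0)
      - (if 3 ≤ n then B (n-3) m else 0)
      + (if 4 ≤ n ∧ 1 ≤ m then B (n-4) (m-1) else 0)
    = if n = 0 ∧ m = 0 then 1 else 0 := by
  simp only [B]
  split_ifs <;> omega

private lemma c_recN (n m : ℕ) :
    cnt n m = (if 2 ≤ n ∧ 1 ≤ m then cnt (n-2) (m-1) else 0)
      + (if m ≤ n ∧ (n - m) % 3 = 0 then 1 else 0) := by
  have hu : (Finset.range (n+1)).filter (fun i => n ≤ 2*m + 3*i ∧ m + 3*i ≤ n)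
      = ((Finset.range (n+1)).filter (fun i => n ≤ 2*m + 3*i ∧ m + 3*i + 1 ≤ n))
        ∪ ((Finset.range (n+1)).filter (fun i => n ≤ 2*m + 3*i ∧ m + 3*i = n)) := by
    ext i
    simp only [Finset.mem_union, Finset.mem_filter, Finset.mem_range]
    omega
  have hd : Disjoint
      ((Finset.range (n+1)).filter (fun i => n ≤ 2*m + 3*i ∧ m + 3*i + 1 ≤ n))
      ((Finset.range (n+1)).filter (fun i => n ≤ 2*m + 3*i ∧ m + 3*i = n)) := by
    rw [Finset.disjoint_left]
    intro i h1 h2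
    simp only [Finset.mem_filter, Finset.mem_range] at h1 h2
    omega
  rw [cnt, hu, Finset.card_union_of_disjoint hd]
  congr 1
  · by_cases h : 2 ≤ n ∧ 1 ≤ m
    · rw [if_pos h, cnt]
      congr 1
      ext i
      simp only [Finset.mem_filter, Finset.mem_range]
      omega
    · rw [if_neg h]
      convert Finset.card_empty
      ext i
      simp only [Finset.mem_filter, Finset.mem_range, Finset.notMem_empty, iff_false]
      omega
  · by_cases h : m ≤ n ∧ (n - m) % 3 = 0
    · rw [if_pos h]
      have hs : (Finset.range (n+1)).filter (fun i => n ≤ 2*m + 3*i ∧ m + 3*i = n)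
          = {(n - m)/3} := by
        ext i
        simp only [Finset.mem_filter, Finset.mem_range, Finset.mem_singleton]
        omega
      rw [hs, Finset.card_singleton]
    · rw [if_neg h]
      convert Finset.card_empty
      ext i
      simp only [Finset.mem_filter, Finset.mem_range, Finset.notMem_empty, iff_false]
      omega

private lemma c_recZ (n m : ℕ) :
    (cnt n m : ℤ) = (if 2 ≤ n ∧ 1 ≤ m then (cnt (n-2) (m-1) : ℤ) else 0) + B n m := by
  rw [c_recN n m, Nat.cast_add, apply_ite (fun k : ℕ => (k : ℤ)),
    apply_ite (fun k : ℕ => (k : ℤ))]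
  simp [B]

private lemma final_id (n m : ℕ) :
    (cnt n m : ℤ) - (if 3 ≤ n then (cnt (n-3) m : ℤ) else 0)
      - (if 1 ≤ n ∧ 1 ≤ m then (cnt (n-1) (m-1) : ℤ) else 0)
      - (if 2 ≤ n ∧ 1 ≤ m then (cnt (n-2) (m-1) : ℤ) else 0)
      + (if 4 ≤ n ∧ 1 ≤ m then (cnt (n-4) (m-1) : ℤ) else 0)
      + (if 5 ≤ n ∧ 1 ≤ m then (cnt (n-5) (m-1) : ℤ) else 0)
      + (if 3 ≤ n ∧ 2 ≤ m then (cnt (n-3) (m-2) : ℤ) else 0)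
      - (if 6 ≤ n ∧ 2 ≤ m then (cnt (n-6) (m-2) : ℤ) else 0)
    = if n = 0 ∧ m = 0 then 1 else 0 := by
  have T1 : (cnt n m : ℤ) - (if 2 ≤ n ∧ 1 ≤ m then (cnt (n-2) (m-1) : ℤ) else 0) = B n m := by
    rw [c_recZ n m]; ring
  have T2 : (if 1 ≤ n ∧ 1 ≤ m then (cnt (n-1) (m-1) : ℤ) else 0)
      - (if 3 ≤ n ∧ 2 ≤ m then (cnt (n-3) (m-2) : ℤ) else 0)
      = (if 1 ≤ n ∧ 1 ≤ m then B (n-1) (m-1) else 0) := by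
    by_cases h : 1 ≤ n ∧ 1 ≤ m
    · rw [if_pos h, if_pos h, c_recZ (n-1) (m-1),
        (by omega : n - 1 - 2 = n - 3), (by omega : m - 1 - 1 = m - 2)]
      simp only [show (2 ≤ n - 1 ∧ 1 ≤ m - 1) ↔ (3 ≤ n ∧ 2 ≤ m) by omega]
      ring
    · rw [if_neg h, if_neg h, if_neg (by omega : ¬(3 ≤ n ∧ 2 ≤ m))]
      ring
  have T3 : (if 3 ≤ n then (cnt (n-3) m : ℤ) else 0)
      - (if 5 ≤ n ∧ 1 ≤ m then (cnt (n-5) (m-1) : ℤ) else 0)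
      = (if 3 ≤ n then B (n-3) m else 0) := by
    by_cases h : 3 ≤ n
    · rw [if_pos h, if_pos h, c_recZ (n-3) m,
        (by omega : n - 3 - 2 = n - 5)]
      simp only [show (2 ≤ n - 3 ∧ 1 ≤ m) ↔ (5 ≤ n ∧ 1 ≤ m) by omega]
      ring
    · rw [if_neg h, if_neg h, if_neg (by omega : ¬(5 ≤ n ∧ 1 ≤ m))]
      ring
  have T4 : (if 4 ≤ n ∧ 1 ≤ m then (cnt (n-4) (m-1) : ℤ) else 0)
      - (if 6 ≤ n ∧ 2 ≤ m then (cnt (n-6) (m-2) : ℤ) else 0)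
      = (if 4 ≤ n ∧ 1 ≤ m then B (n-4) (m-1) else 0) := by
    by_cases h : 4 ≤ n ∧ 1 ≤ m
    · rw [if_pos h, if_pos h, c_recZ (n-4) (m-1),
        (by omega : n - 4 - 2 = n - 6), (by omega : m - 1 - 1 = m - 2)]
      simp only [show (2 ≤ n - 4 ∧ 1 ≤ m - 1) ↔ (6 ≤ n ∧ 2 ≤ m) by omega]
      ring
    · rw [if_neg h, if_neg h, if_neg (by omega : ¬(6 ≤ n ∧ 2 ≤ m))]
      ring
  calc (cnt n m : ℤ) - (if 3 ≤ n then (cnt (n-3) m : ℤ) else 0)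
      - (if 1 ≤ n ∧ 1 ≤ m then (cnt (n-1) (m-1) : ℤ) else 0)
      - (if 2 ≤ n ∧ 1 ≤ m then (cnt (n-2) (m-1) : ℤ) else 0)
      + (if 4 ≤ n ∧ 1 ≤ m then (cnt (n-4) (m-1) : ℤ) else 0)
      + (if 5 ≤ n ∧ 1 ≤ m then (cnt (n-5) (m-1) : ℤ) else 0)
      + (if 3 ≤ n ∧ 2 ≤ m then (cnt (n-3) (m-2) : ℤ) else 0)
      - (if 6 ≤ n ∧ 2 ≤ m then (cnt (n-6) (m-2) : ℤ) else 0)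
      = B n m - (if 1 ≤ n ∧ 1 ≤ m then B (n-1) (m-1) else 0)
        - (if 3 ≤ n then B (n-3) m else 0)
        + (if 4 ≤ n ∧ 1 ≤ m then B (n-4) (m-1) else 0) := by
        linear_combination T1 - T2 - T3 + T4
    _ = if n = 0 ∧ m = 0 then 1 else 0 := b_id n m

private lemma card3_eq (n m : ℕ) :
    ((Finset.range (n + 1) ×ˢ Finset.range (n + 1) ×ˢ Finset.range (n + 1)).filter
        (fun p => p.1 + 2 * p.2.1 = n ∧ p.2.2 ≤ min p.1 p.2.1 ∧
          p.1 + p.2.1 = m + 2 * p.2.2)).card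
      = cnt n m := by
  apply Finset.card_bij (fun p _ => p.2.2)
  · rintro ⟨k1, k2, i⟩ hp
    simp only [Finset.mem_filter, Finset.mem_product, Finset.mem_range] at hp ⊢
    omega
  · rintro ⟨k1, k2, i⟩ hp ⟨l1, l2, j⟩ hq h
    simp only [Finset.mem_filter, Finset.mem_product, Finset.mem_range] at hp hq
    simp only at h
    simp only [Prod.mk.injEq]
    omega
  · intro i hi
    simp only [cnt, Finset.mem_filter, Finset.mem_range] at hi
    refine ⟨(2*m + 4*i - n, n - m - 2*i, i), ?_, rfl⟩
    simp only [Finset.mem_filter, Finset.mem_product, Finset.mem_range]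
    omega

private lemma le_iff2 (e : Fin 2 →₀ ℕ) (a b : ℕ) :
    (Finsupp.single 0 a + Finsupp.single 1 b : Fin 2 →₀ ℕ) ≤ e ↔ a ≤ e 0 ∧ b ≤ e 1 := by
  rw [Finsupp.le_def]
  constructor
  · intro h
    refine ⟨?_, ?_⟩
    · simpa [Finsupp.single_apply] using h 0
    · simpa [Finsupp.single_apply] using h 1
  · rintro ⟨h0, h1⟩ s
    fin_cases s <;> simp [Finsupp.single_apply] <;> assumption

private lemma sub_apply0 (e : Fin 2 →₀ ℕ) (a b : ℕ) :
    (e - (Finsupp.single 0 a + Finsupp.single 1 b) : Fin 2 →₀ ℕ) 0 = e 0 - a := by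
  simp [Finsupp.single_apply]

private lemma sub_apply1 (e : Fin 2 →₀ ℕ) (a b : ℕ) :
    (e - (Finsupp.single 0 a + Finsupp.single 1 b) : Fin 2 →₀ ℕ) 1 = e 1 - b := by
  simp [Finsupp.single_apply]

private lemma eq_zero_iff2 (e : Fin 2 →₀ ℕ) : e = 0 ↔ e 0 = 0 ∧ e 1 = 0 := by
  constructor
  · rintro rfl; simp
  · rintro ⟨h0, h1⟩
    ext s
    fin_cases s <;> simpa

set_option maxHeartbeats 1000000 in
/-- In `ℤ[[X,T]]` (with `X = X 0`, `T = X 1`):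
`(1−X³)(1−TX)(1−TX²) · ∑_{k₁,k₂≥0} ∑_{i=0}^{min(k₁,k₂)} X^{k₁+2k₂} T^{k₁+k₂−2i} = 1`.
The series is encoded via its coefficients: the coefficient of `X^n T^m` is
the number of triples `(k₁,k₂,i)` with `k₁ + 2k₂ = n`, `0 ≤ i ≤ min(k₁,k₂)`
and `k₁ + k₂ − 2i = m` (equivalently `k₁ + k₂ = m + 2i`). -/
theorem stmt5 (S : MvPowerSeries (Fin 2) ℤ)
    (hS : ∀ e : Fin 2 →₀ ℕ, MvPowerSeries.coeff e S =
      (((Finset.range (e 0 + 1) ×ˢ Finset.range (e 0 + 1) ×ˢ Finset.range (e 0 + 1)).filter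
          (fun p => p.1 + 2 * p.2.1 = e 0 ∧ p.2.2 ≤ min p.1 p.2.1 ∧
            p.1 + p.2.1 = e 1 + 2 * p.2.2)).card : ℤ)) :
    (1 - (X 0) ^ 3) * (1 - X 1 * X 0) * (1 - X 1 * (X 0) ^ 2) * S = 1 := by
  classical
  have hS' : ∀ e : Fin 2 →₀ ℕ, MvPowerSeries.coeff e S = (cnt (e 0) (e 1) : ℤ) := by
    intro e
    rw [hS e, card3_eq]
  have hM : ∀ a b : ℕ, (X 0 : MvPowerSeries (Fin 2) ℤ) ^ a * (X 1) ^ b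
      = monomial (Finsupp.single 0 a + Finsupp.single 1 b) 1 := by
    intro a b
    rw [X_pow_eq, X_pow_eq, monomial_mul_monomial, one_mul]
  have hPS : (1 - (X 0 : MvPowerSeries (Fin 2) ℤ) ^ 3) * (1 - X 1 * X 0) * (1 - X 1 * (X 0) ^ 2) * S
      = S - monomial (Finsupp.single 0 3 + Finsupp.single 1 0) 1 * S
          - monomial (Finsupp.single 0 1 + Finsupp.single 1 1) 1 * S
          - monomial (Finsupp.single 0 2 + Finsupp.single 1 1) 1 * S
          + monomial (Finsupp.single 0 4 + Finsupp.single 1 1) 1 * S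
          + monomial (Finsupp.single 0 5 + Finsupp.single 1 1) 1 * S
          + monomial (Finsupp.single 0 3 + Finsupp.single 1 2) 1 * S
          - monomial (Finsupp.single 0 6 + Finsupp.single 1 2) 1 * S := by
    rw [← hM 3 0, ← hM 1 1, ← hM 2 1, ← hM 4 1, ← hM 5 1, ← hM 3 2, ← hM 6 2]
    ring
  apply MvPowerSeries.ext
  intro e
  have key : ∀ a b : ℕ, (MvPowerSeries.coeff e)
      ((monomial (Finsupp.single 0 a + Finsupp.single 1 b) (1:ℤ)) * S)
      = if a ≤ e 0 ∧ b ≤ e 1 then (cnt (e 0 - a) (e 1 - b) : ℤ) else 0 := by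
    intro a b
    rw [coeff_monomial_mul]
    by_cases h : (Finsupp.single 0 a + Finsupp.single 1 b : Fin 2 →₀ ℕ) ≤ e
    · rw [if_pos h, if_pos ((le_iff2 e a b).mp h), one_mul, hS', sub_apply0, sub_apply1]
    · rw [if_neg h, if_neg (fun hc => h ((le_iff2 e a b).mpr hc))]
  rw [hPS, map_sub, map_add, map_add, map_add, map_sub, map_sub, map_sub,
    key 3 0, key 1 1, key 2 1, key 4 1, key 5 1, key 3 2, key 6 2, hS' e, coeff_one]
  simp only [eq_zero_iff2, Nat.sub_zero, Nat.zero_le, and_true]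
  exact final_id (e 0) (e 1)
end
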